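/- If R is a p-torsion free commutative ring, then the ring W(R) of p-typical Witt vectors of R is p-torsion free. -/

import Mathlib

/-- If `R` is `p`-torsion free then `W(R)` is `p`-torsion free. -/
theorem wittVector_p_torsion_free (p : ℕ) [Fact p.Prime]
    (R : Type*) [CommRing R] (hR : ∀ r : R, p • r = 0 → r = 0) :
    ∀ x : WittVector p R, p • x = 0 → x = 0 := by
  intro x hx
  set A := Localization.Away ((p : ℕ) : R) with hA
  have hpA : IsUnit ((p : ℕ) : A) := by
    have h := IsLocalization.Away.algebraMap_isUnit (S := A) (x := ((p : ℕ) : R))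
    rwa [map_natCast] at h
  have hinj : Function.Injective (algebraMap R A) := by
    apply IsLocalization.injective A (M := Submonoid.powers ((p : ℕ) : R))
    rw [Submonoid.powers_le, mem_nonZeroDivisors_iff_right]
    intro r hr
    refine hR r ?_
    rw [nsmul_eq_mul, mul_comm]
    exact hr
  have hWinj := WittVector.map_injective (p := p) (algebraMap R A) hinj
  apply hWinj
  rw [map_zero]
  have hm : WittVector.map (p := p) (algebraMap R A) (p • x) = 0 := by
    rw [hx, map_zero]
  rw [map_nsmul] at hm
  have hpW : IsUnit ((p : ℕ) : WittVector p A) := by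
    have h2 : IsUnit ((p : ℕ) : (ℕ → A)) := by
      have := hpA.map (Pi.constRingHom ℕ A)
      simpa using this
    haveI : Invertible ((p : ℕ) : A) := hpA.invertible
    have h3 := h2.map (WittVector.ghostEquiv p A).symm.toRingHom
    rwa [RingEquiv.toRingHom_eq_coe, RingHom.coe_coe, map_natCast] at h3
  rw [nsmul_eq_mul] at hm
  exact (hpW.mul_right_eq_zero).mp hm
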